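/- Let ψ ∈ H²(ℝ²) and for j = 1, 2 write ∂_{x_j}ψ = |∂_{x_j}ψ| φ_j with φ_j a polar factor of ∂_{x_j}ψ. Then almost everywhere |∂²_{x_j}ψ|² = (∂_{x_j}|∂_{x_j}ψ|)² + (Im(∂_{x_j}ψ̄ · ∂²_{x_j}ψ) / |∂_{x_j}ψ|)², where the second term is interpreted as 0 where ∂_{x_j}ψ = 0. -/

import Mathlib

open MeasureTheory Complex

noncomputable section

open Metric Filter Set ENNReal in
set_option maxHeartbeats 1000000 in
theorem fderiv_zero_ae_on_zero_set
    {f : EuclideanSpace ℝ (Fin 2) → ℂ} (hf : Differentiable ℝ f)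
    (v : EuclideanSpace ℝ (Fin 2)) (hv : ‖v‖ = 1) :
    ∀ᵐ x ∂(volume : Measure (EuclideanSpace ℝ (Fin 2))),
      f x = 0 → fderiv ℝ f x v = 0 := by
  set μ : Measure (EuclideanSpace ℝ (Fin 2)) := volume
  set s : Set (EuclideanSpace ℝ (Fin 2)) := f ⁻¹' {0} with hs_def
  have hs : MeasurableSet s :=
    hf.continuous.measurable (measurableSet_singleton 0)
  filter_upwards [Besicovitch.ae_tendsto_measure_inter_div_of_measurableSet μ hs]
    with x hx hfx
  have hxs : x ∈ s := by simpa [hs_def] using hfx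
  rw [Set.indicator_of_mem hxs] at hx
  simp only [Pi.one_apply] at hx
  set L := fderiv ℝ f x with hL_def
  have hL : HasFDerivAt f L x := (hf x).hasFDerivAt
  have key : ∀ ε : ℝ, 0 < ε → ε ≤ 1 → ‖L v‖ ≤ ε * (2 + ‖L‖) := by
    intro ε hε0 hε1
    have hlo := Asymptotics.isLittleO_iff.mp hL.isLittleO hε0
    rw [Metric.eventually_nhds_iff] at hlo
    obtain ⟨δ, hδ0, hδ⟩ := hlo
    set θ : ℝ := ε ^ 2 / 8 with hθ_def
    have hθ0 : 0 < θ := by positivity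
    have hθ1 : θ ≤ 1 := by rw [hθ_def]; nlinarith
    have hlt : (1 : ℝ≥0∞) - ENNReal.ofReal θ < 1 :=
      ENNReal.sub_lt_self ENNReal.one_ne_top one_ne_zero
        (by simpa using ENNReal.ofReal_pos.2 hθ0)
    have hev := hx.eventually (eventually_gt_nhds hlt)
    obtain ⟨r0, hr0mem, hr0⟩ := mem_nhdsGT_iff_exists_Ioc_subset.1 hev
    have hr00 : (0 : ℝ) < r0 := hr0mem
    set r : ℝ := min (δ / 3) (r0 / 2) with hr_def
    have hr0' : 0 < r := lt_min (by linarith) (by linarith)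
    set ρ : ℝ := 2 * r with hρ_def
    have hρ0 : 0 < ρ := by positivity
    have hρr0 : ρ ≤ r0 := by
      have : r ≤ r0 / 2 := min_le_right _ _
      simp only [hρ_def]; linarith
    have hρδ : ρ < δ := by
      have : r ≤ δ / 3 := min_le_left _ _
      simp only [hρ_def]; linarith
    have hdens : (1 : ℝ≥0∞) - ENNReal.ofReal θ
        < μ (s ∩ closedBall x ρ) / μ (closedBall x ρ) := hr0 ⟨hρ0, hρr0⟩
    set z := x + r • v with hz_def
    have hdistzx : dist z x = r := by
      simp [hz_def, dist_eq_norm, norm_smul, hv, abs_of_pos hr0']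
    have hB12 : closedBall z (ε * r) ⊆ closedBall x ρ := by
      intro y hy
      simp only [mem_closedBall] at hy ⊢
      have h1 : dist y z ≤ ε * r := hy
      calc dist y x ≤ dist y z + dist z x := dist_triangle _ _ _
        _ ≤ ε * r + r := by rw [hdistzx]; linarith
        _ ≤ ρ := by simp only [hρ_def]; nlinarith
    have hne : (s ∩ closedBall z (ε * r)).Nonempty := by
      by_contra hemp
      rw [Set.not_nonempty_iff_eq_empty] at hemp
      have hdisj : Disjoint (s ∩ closedBall x ρ) (closedBall z (ε * r)) := by
        rw [Set.disjoint_iff_inter_eq_empty,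
          show s ∩ closedBall x ρ ∩ closedBall z (ε * r)
            = (s ∩ closedBall z (ε * r)) ∩ closedBall x ρ by ext y; simp; tauto]
        simp [hemp]
      have hunion : μ (s ∩ closedBall x ρ) + μ (closedBall z (ε * r))
          ≤ μ (closedBall x ρ) := by
        rw [← measure_union hdisj measurableSet_closedBall]
        exact measure_mono (Set.union_subset inter_subset_right hB12)
      have hdim : Module.finrank ℝ (EuclideanSpace ℝ (Fin 2)) = 2 := by
        simp [finrank_euclideanSpace]
      set U := μ (closedBall (0 : EuclideanSpace ℝ (Fin 2)) 1) with hU_def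
      have hB1vol : μ (closedBall z (ε * r)) = ENNReal.ofReal ((ε * r) ^ 2) * U := by
        rw [Measure.addHaar_closedBall' μ z (by positivity), hdim]
      have hB2vol : μ (closedBall x ρ) = ENNReal.ofReal (ρ ^ 2) * U := by
        rw [Measure.addHaar_closedBall' μ x hρ0.le, hdim]
      have hB2ne0 : μ (closedBall x ρ) ≠ 0 := (measure_closedBall_pos μ _ hρ0).ne'
      have hB2netop : μ (closedBall x ρ) ≠ ⊤ := measure_closedBall_lt_top.ne
      have hB1netop : μ (closedBall z (ε * r)) ≠ ⊤ := measure_closedBall_lt_top.ne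
      have hdens' : (1 - ENNReal.ofReal θ) * μ (closedBall x ρ)
          < μ (s ∩ closedBall x ρ) :=
        (ENNReal.lt_div_iff_mul_lt (Or.inl hB2ne0) (Or.inl hB2netop)).1 hdens
      have hstep : (1 - ENNReal.ofReal θ) * μ (closedBall x ρ)
            + μ (closedBall z (ε * r)) < μ (closedBall x ρ) :=
        lt_of_lt_of_le (ENNReal.add_lt_add_right hB1netop hdens') hunion
      have hsub : (1 : ℝ≥0∞) - ENNReal.ofReal θ = ENNReal.ofReal (1 - θ) := by
        rw [ENNReal.ofReal_sub _ hθ0.le, ENNReal.ofReal_one]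
      rw [hsub, hB1vol, hB2vol, ← mul_assoc,
        ← ENNReal.ofReal_mul (by linarith : (0:ℝ) ≤ 1 - θ), ← add_mul,
        ← ENNReal.ofReal_add (by nlinarith) (by positivity)] at hstep
      have hge : ENNReal.ofReal (ρ ^ 2) * U
          ≤ ENNReal.ofReal ((1 - θ) * ρ ^ 2 + (ε * r) ^ 2) * U := by
        refine mul_le_mul_left (ENNReal.ofReal_le_ofReal ?_) U
        have hεr : (ε * r) ^ 2 = 2 * θ * ρ ^ 2 := by
          simp only [hθ_def, hρ_def]; ring
        nlinarith [sq_nonneg ρ]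
      exact absurd (lt_of_le_of_lt hge hstep) (lt_irrefl _)
    obtain ⟨y, hys, hyB⟩ := hne
    have hyz : dist y z ≤ ε * r := hyB
    have hyx : dist y x ≤ ρ := hB12 hyB
    have hfy : f y = 0 := hys
    have hlo' : ‖f y - f x - L (y - x)‖ ≤ ε * ‖y - x‖ :=
      hδ (lt_of_le_of_lt hyx hρδ)
    rw [hfy, hfx, sub_zero, zero_sub, norm_neg] at hlo'
    have h1 : ‖L (y - x)‖ ≤ ε * ρ := by
      calc ‖L (y - x)‖ ≤ ε * ‖y - x‖ := hlo'
        _ ≤ ε * ρ := by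
          have : ‖y - x‖ = dist y x := (dist_eq_norm y x).symm
          rw [this]; exact mul_le_mul_of_nonneg_left hyx hε0.le
    have h2 : ‖L (z - y)‖ ≤ ‖L‖ * (ε * r) := by
      calc ‖L (z - y)‖ ≤ ‖L‖ * ‖z - y‖ := L.le_opNorm _
        _ ≤ ‖L‖ * (ε * r) := by
          have : ‖z - y‖ = dist z y := (dist_eq_norm z y).symm
          rw [this, dist_comm]
          exact mul_le_mul_of_nonneg_left hyz (norm_nonneg _)
    have h3 : r * ‖L v‖ ≤ ε * ρ + ‖L‖ * (ε * r) := by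
      have hzx : z - x = r • v := by simp [hz_def]
      have : L (r • v) = L (y - x) + L (z - y) := by
        rw [← hzx, ← map_add]; congr 1; abel
      have h4 : ‖L (r • v)‖ ≤ ε * ρ + ‖L‖ * (ε * r) := by
        rw [this]
        exact le_trans (norm_add_le _ _) (add_le_add h1 h2)
      rwa [L.map_smul, norm_smul, Real.norm_eq_abs, abs_of_pos hr0'] at h4
    have : r * ‖L v‖ ≤ r * (ε * (2 + ‖L‖)) := by
      calc r * ‖L v‖ ≤ ε * ρ + ‖L‖ * (ε * r) := h3
        _ = r * (ε * (2 + ‖L‖)) := by simp only [hρ_def]; ring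
    exact le_of_mul_le_mul_left this hr0'
  by_contra hne0
  have hpos : 0 < ‖L v‖ := norm_pos_iff.2 hne0
  have hc : (0 : ℝ) < 2 + ‖L‖ := by positivity
  set ε : ℝ := min 1 (‖L v‖ / (2 * (2 + ‖L‖))) with hε_def
  have hε0 : 0 < ε := lt_min one_pos (by positivity)
  have := key ε hε0 (min_le_left _ _)
  have hεle : ε ≤ ‖L v‖ / (2 * (2 + ‖L‖)) := min_le_right _ _
  have : ‖L v‖ ≤ ‖L v‖ / 2 := by
    calc ‖L v‖ ≤ ε * (2 + ‖L‖) := this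
      _ ≤ ‖L v‖ / (2 * (2 + ‖L‖)) * (2 + ‖L‖) := by
          exact mul_le_mul_of_nonneg_right hεle hc.le
      _ = ‖L v‖ / 2 := by field_simp
  linarith

theorem main_aux
    (ψ : EuclideanSpace ℝ (Fin 2) → ℂ)
    (hψ2diff : ∀ i : Fin 2, Differentiable ℝ (fun x => fderiv ℝ ψ x (EuclideanSpace.single i 1)))
    (j : Fin 2) :
    ∀ᵐ x ∂(volume : Measure (EuclideanSpace ℝ (Fin 2))),
      ‖fderiv ℝ (fun y => fderiv ℝ ψ y (EuclideanSpace.single j 1)) x (EuclideanSpace.single j 1)‖ ^ 2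
        = (fderiv ℝ (fun y => ‖fderiv ℝ ψ y (EuclideanSpace.single j 1)‖) x (EuclideanSpace.single j 1)) ^ 2
          + (if fderiv ℝ ψ x (EuclideanSpace.single j 1) = 0 then 0
             else (((starRingEnd ℂ) (fderiv ℝ ψ x (EuclideanSpace.single j 1))
                 * fderiv ℝ (fun y => fderiv ℝ ψ y (EuclideanSpace.single j 1)) x (EuclideanSpace.single j 1)).im
               / ‖fderiv ℝ ψ x (EuclideanSpace.single j 1)‖) ^ 2) := by
  have hg : Differentiable ℝ (fun y => fderiv ℝ ψ y (EuclideanSpace.single j 1)) := hψ2diff j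
  have hvnorm : ‖(EuclideanSpace.single j (1:ℝ) : EuclideanSpace ℝ (Fin 2))‖ = 1 := by
    simp [EuclideanSpace.norm_single]
  filter_upwards [fderiv_zero_ae_on_zero_set hg _ hvnorm] with x hzero
  set v : EuclideanSpace ℝ (Fin 2) := EuclideanSpace.single j 1 with hv_def
  show ‖fderiv ℝ (fun y => fderiv ℝ ψ y v) x v‖ ^ 2
      = (fderiv ℝ (fun y => ‖fderiv ℝ ψ y v‖) x v) ^ 2
        + (if fderiv ℝ ψ x v = 0 then 0
           else (((starRingEnd ℂ) (fderiv ℝ ψ x v)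
               * fderiv ℝ (fun y => fderiv ℝ ψ y v) x v).im / ‖fderiv ℝ ψ x v‖) ^ 2)
  have hgx_eq : (fun y => fderiv ℝ ψ y v) x = fderiv ℝ ψ x v := rfl
  by_cases h0 : fderiv ℝ ψ x v = 0
  · have hh0 : fderiv ℝ (fun y => fderiv ℝ ψ y v) x v = 0 := hzero h0
    have hmin : fderiv ℝ (fun y => ‖fderiv ℝ ψ y v‖) x = 0 := by
      by_cases hd : DifferentiableAt ℝ (fun y => ‖fderiv ℝ ψ y v‖) x
      · refine IsLocalMin.fderiv_eq_zero ?_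
        refine Filter.Eventually.of_forall fun y => ?_
        simp [h0]
      · exact fderiv_zero_of_not_differentiableAt hd
    rw [if_pos h0, hh0, hmin]
    simp
  · rw [if_neg h0]
    set g : EuclideanSpace ℝ (Fin 2) → ℂ := fun y => fderiv ℝ ψ y v with hg_def
    set h : ℂ := fderiv ℝ g x v with hh_def
    have hgx : g x = fderiv ℝ ψ x v := rfl
    have hgx0 : g x ≠ 0 := h0
    have hgd : DifferentiableAt ℝ g x := hg x
    have hq : HasFDerivAt (fun y => ‖g y‖ ^ 2)
        (2 • ((innerSL ℝ (g x)).comp (fderiv ℝ g x))) x :=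
      hgd.hasFDerivAt.norm_sq
    have hqx : ‖g x‖ ^ 2 ≠ 0 := pow_ne_zero 2 (norm_ne_zero_iff.2 hgx0)
    have hsq := hq.sqrt hqx
    have hfun : (fun y => Real.sqrt (‖g y‖ ^ 2)) = fun y => ‖g y‖ := by
      funext y; exact Real.sqrt_sq (norm_nonneg _)
    rw [hfun] at hsq
    have hgnorm : (0:ℝ) < ‖g x‖ := norm_pos_iff.2 hgx0
    have hfd : fderiv ℝ (fun y => ‖g y‖) x v
        = (1 / (2 * ‖g x‖)) * (2 * (inner ℝ (g x) h : ℝ)) := by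
      rw [hsq.fderiv]
      simp [Real.sqrt_sq (norm_nonneg _), hh_def]; left; ring
    have hinner : (inner ℝ (g x) h : ℝ) = ((starRingEnd ℂ) (g x) * h).re :=
      by rw [mul_comm]; exact Complex.inner (g x) h
    have hfd' : fderiv ℝ (fun y => ‖g y‖) x v
        = ((starRingEnd ℂ) (g x) * h).re / ‖g x‖ := by
      rw [hfd, hinner]; field_simp
    show ‖h‖ ^ 2 = (fderiv ℝ (fun y => ‖g y‖) x v) ^ 2
        + (((starRingEnd ℂ) (g x) * h).im / ‖g x‖) ^ 2
    rw [hfd']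
    set w : ℂ := (starRingEnd ℂ) (g x) * h with hw_def
    have hw : ‖w‖ ^ 2 = ‖g x‖ ^ 2 * ‖h‖ ^ 2 := by
      rw [hw_def, norm_mul, RingHomIsometric.norm_map]; ring
    have hresq : ‖w‖ ^ 2 = w.re ^ 2 + w.im ^ 2 := by
      rw [Complex.sq_norm, Complex.normSq_apply]; ring
    have hkey : w.re ^ 2 + w.im ^ 2 = ‖g x‖ ^ 2 * ‖h‖ ^ 2 := by rw [← hresq, hw]
    rw [div_pow, div_pow, ← add_div, hkey, mul_comm,
      mul_div_assoc, div_self (pow_ne_zero 2 hgnorm.ne'), mul_one]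

/-- Partial derivative of a complex-valued function in direction `i`. -/
def pdc {d : ℕ} (i : Fin d) (f : EuclideanSpace ℝ (Fin d) → ℂ)
    (x : EuclideanSpace ℝ (Fin d)) : ℂ :=
  fderiv ℝ f x (EuclideanSpace.single i 1)

/-- Partial derivative of a real-valued function in direction `i`. -/
def pd {d : ℕ} (i : Fin d) (f : EuclideanSpace ℝ (Fin d) → ℝ)
    (x : EuclideanSpace ℝ (Fin d)) : ℝ :=
  fderiv ℝ f x (EuclideanSpace.single i 1)

set_option maxHeartbeats 1000000 in
/-- For `ψ ∈ H²(ℝ²)` with `∂_{x_j}ψ = |∂_{x_j}ψ| φ_j`, `φ_j` a polar factor of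
`∂_{x_j}ψ`, the identity
`|∂²_{x_j}ψ|² = (∂_{x_j}|∂_{x_j}ψ|)² + (Im(∂_{x_j}ψ̄ ∂²_{x_j}ψ)/|∂_{x_j}ψ|)²`
holds almost everywhere, the last term interpreted as `0` where `∂_{x_j}ψ = 0`. -/
theorem second_derivative_polar_decomposition
    (ψ : EuclideanSpace ℝ (Fin 2) → ℂ)
    (hψdiff : Differentiable ℝ ψ)
    (hψ2diff : ∀ i : Fin 2, Differentiable ℝ (fun x => pdc i ψ x))
    (hψL2 : MemLp ψ 2 volume)
    (hgradL2 : MemLp (fun x => fderiv ℝ ψ x) 2 volume)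
    (hhessL2 : ∀ i : Fin 2, MemLp (fun x => fderiv ℝ (fun y => pdc i ψ y) x) 2 volume)
    (j : Fin 2) (φj : EuclideanSpace ℝ (Fin 2) → ℂ)
    (hφj : ∀ᵐ x ∂volume, ‖φj x‖ ≤ 1)
    (hpolarj : ∀ᵐ x ∂volume, (‖pdc j ψ x‖ : ℂ) * φj x = pdc j ψ x) :
    ∀ᵐ x ∂volume,
      ‖pdc j (fun y => pdc j ψ y) x‖ ^ 2
        = (pd j (fun y => ‖pdc j ψ y‖) x) ^ 2
          + (if pdc j ψ x = 0 then 0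
             else (((starRingEnd ℂ) (pdc j ψ x) * pdc j (fun y => pdc j ψ y) x).im
               / ‖pdc j ψ x‖) ^ 2) := by
  exact main_aux ψ hψ2diff j

end
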